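/- Continuity of the unordered roots of a monic complex polynomial: let k ≥ 1 and let a : Fin k → ℂ and r : Fin k → ℂ satisfy X^k + ∑_{i<k} (a i) • X^i = ∏_{i<k} (X − C (r i)) in ℂ[X]. Then for every ε > 0 there exists δ > 0 such that for all b : Fin k → ℂ and s : Fin k → ℂ with ‖b i − a i‖ < δ for all i and with X^k + ∑_{i<k} (b i) • X^i = ∏_{i<k} (X − C (s i)), there exists a permutation σ : Equiv.Perm (Fin k) such that ‖s i − r (σ i)‖ < ε for every i : Fin k. -/
import Mathlib


open Polynomial

theorem exists_perm_of_ofFn_perm {α : Type*} : ∀ {k : ℕ} (s r : Fin k → α),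
    (List.ofFn s).Perm (List.ofFn r) → ∃ σ : Equiv.Perm (Fin k), ∀ i, s i = r (σ i) := by
  intro k
  induction k with
  | zero => exact fun s r _ => ⟨1, fun i => i.elim0⟩
  | succ k ih =>
    intro s r hp
    have h0 : s 0 ∈ List.ofFn r := hp.mem_iff.mp (by rw [List.mem_ofFn]; exact ⟨0, rfl⟩)
    rw [List.mem_ofFn] at h0
    obtain ⟨j, hj⟩ := h0
    have hp' : (List.ofFn s).Perm (List.ofFn (r ∘ Equiv.swap 0 j)) :=
      hp.trans (Equiv.Perm.ofFn_comp_perm (Equiv.swap 0 j) r).symm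
    have hr0 : (r ∘ Equiv.swap 0 j) 0 = s 0 := by
      simp [Equiv.swap_apply_left, hj]
    rw [List.ofFn_succ, List.ofFn_succ, hr0] at hp'
    obtain ⟨σ', hσ'⟩ := ih (fun i => s i.succ) (fun i => (r ∘ Equiv.swap 0 j) i.succ)
      hp'.cons_inv
    refine ⟨Equiv.Perm.decomposeFin.symm (j, σ'), fun i => ?_⟩
    refine Fin.cases ?_ (fun i => ?_) i
    · rw [Equiv.Perm.decomposeFin_symm_apply_zero]; exact hj.symm
    · rw [Equiv.Perm.decomposeFin_symm_apply_succ]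
      exact hσ' i

theorem cont_coeff {k : ℕ} (t : Finset (Fin k)) :
    ∀ j : ℕ, Continuous fun s : Fin k → ℂ => (∏ i ∈ t, (X - C (s i))).coeff j := by
  classical
  induction t using Finset.induction_on with
  | empty => intro j; simpa using continuous_const
  | @insert a t ha ih =>
    intro j
    have key : ∀ s : Fin k → ℂ, (∏ i ∈ insert a t, (X - C (s i))).coeff j =
        (if j = 0 then 0 else (∏ i ∈ t, (X - C (s i))).coeff (j - 1))
          - s a * (∏ i ∈ t, (X - C (s i))).coeff j := by
      intro s
      rw [Finset.prod_insert ha, sub_mul, coeff_sub, coeff_C_mul]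
      congr 1
      cases j with
      | zero => simp [mul_coeff_zero]
      | succ j => simp [coeff_X_mul]
    simp only [key]
    refine Continuous.sub ?_ ((continuous_apply a).mul (ih j))
    by_cases hj : j = 0
    · simp only [hj, if_pos]; exact continuous_const
    · simp only [hj, if_neg, if_false]; exact ih (j - 1)

theorem coeff_of_eq {k : ℕ} (b : Fin k → ℂ) (Q : Polynomial ℂ)
    (h : (X ^ k + ∑ i : Fin k, b i • X ^ (i : ℕ) : Polynomial ℂ) = Q) (j : Fin k) :
    Q.coeff j = b j := by
  subst h
  rw [coeff_add, coeff_X_pow, if_neg (by omega : ¬ (j : ℕ) = k), zero_add, finset_sum_coeff]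
  rw [Finset.sum_eq_single j]
  · simp [coeff_smul, coeff_X_pow]
  · intro i _ hij
    have : (j : ℕ) ≠ (i : ℕ) := fun hh => hij (Fin.ext hh.symm)
    simp [coeff_smul, coeff_X_pow, this]
  · simp

theorem monic_rep {k : ℕ} (Q : Polynomial ℂ) (hm : Q.Monic) (hd : Q.natDegree = k) :
    (X ^ k + ∑ i : Fin k, Q.coeff i • X ^ (i : ℕ) : Polynomial ℂ) = Q := by
  conv_rhs => rw [hm.as_sum, hd]
  congr 1
  rw [Fin.sum_univ_eq_sum_range (fun i => Q.coeff i • X ^ i)]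
  exact Finset.sum_congr rfl fun i _ => smul_eq_C_mul _

theorem prod_monic {k : ℕ} (s : Fin k → ℂ) :
    (∏ i : Fin k, (X - C (s i))).Monic :=
  monic_prod_of_monic _ _ fun i _ => monic_X_sub_C (s i)

theorem prod_natDegree {k : ℕ} (s : Fin k → ℂ) :
    (∏ i : Fin k, (X - C (s i))).natDegree = k := by
  rw [natDegree_prod_of_monic _ _ fun i _ => monic_X_sub_C (s i)]
  simp

theorem prod_roots {k : ℕ} (s : Fin k → ℂ) :
    (∏ i : Fin k, (X - C (s i))).roots = Multiset.map s Finset.univ.val := by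
  rw [Finset.prod_eq_multiset_prod]
  have h2 : Multiset.map (fun i => X - C (s i)) Finset.univ.val
      = Multiset.map (fun a => X - C a) (Multiset.map s Finset.univ.val) := by
    rw [Multiset.map_map]; rfl
  rw [h2, roots_multiset_prod_X_sub_C]

theorem root_bound {k : ℕ} (s : Fin k → ℂ) (B : NNReal)
    (hc : ∀ j : Fin k, ‖(∏ i : Fin k, (X - C (s i))).coeff j‖₊ ≤ B) (i : Fin k) :
    ‖s i‖₊ < B + 1 := by
  set p := ∏ i : Fin k, (X - C (s i)) with hp
  have hroot : p.IsRoot (s i) := by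
    rw [IsRoot.def, hp, eval_prod]
    exact Finset.prod_eq_zero (Finset.mem_univ i) (by simp)
  have hlt := hroot.norm_lt_cauchyBound (prod_monic s).ne_zero
  refine hlt.trans_le ?_
  rw [cauchyBound, (prod_monic s).leadingCoeff, prod_natDegree s]
  simp only [nnnorm_one, div_one]
  gcongr
  exact Finset.sup_le fun j hj => hc ⟨j, Finset.mem_range.mp hj⟩

theorem roots_continuous (k : ℕ) (hk : 1 ≤ k) (a r : Fin k → ℂ)
    (h : (X ^ k + ∑ i : Fin k, a i • X ^ (i : ℕ) : Polynomial ℂ) =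
      ∏ i : Fin k, (X - C (r i))) :
    ∀ ε > 0, ∃ δ > 0, ∀ b s : Fin k → ℂ,
      (∀ i, ‖b i - a i‖ < δ) →
      (X ^ k + ∑ i : Fin k, b i • X ^ (i : ℕ) : Polynomial ℂ) =
        ∏ i : Fin k, (X - C (s i)) →
      ∃ σ : Equiv.Perm (Fin k), ∀ i, ‖s i - r (σ i)‖ < ε := by
  intro ε hε
  by_contra hcon
  push_neg at hcon
  have H : ∀ n : ℕ, ∃ b s : Fin k → ℂ, (∀ i, ‖b i - a i‖ < 1 / (n + 1)) ∧
      ((X ^ k + ∑ i : Fin k, b i • X ^ (i : ℕ) : Polynomial ℂ) =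
        ∏ i : Fin k, (X - C (s i))) ∧
      ∀ σ : Equiv.Perm (Fin k), ∃ i, ε ≤ ‖s i - r (σ i)‖ := by
    intro n
    obtain ⟨b, s, h1, h2, h3⟩ := hcon (1 / (n + 1)) (by positivity)
    exact ⟨b, s, h1, h2, h3⟩
  choose b' s' hb hpoly hfar using H
  -- coefficients of product equal b'
  have hcoeff : ∀ n (j : Fin k), (∏ i : Fin k, (X - C (s' n i))).coeff j = b' n j :=
    fun n j => coeff_of_eq (b' n) _ (hpoly n) j
  -- bound on the b'
  set A : NNReal := Finset.univ.sup fun i => ‖a i‖₊ with hA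
  have hbbound : ∀ n (j : Fin k), ‖b' n j‖₊ ≤ A + 1 := by
    intro n j
    have h1 : ‖b' n j - a j‖ ≤ 1 := by
      refine (hb n j).le.trans ?_
      rw [div_le_one (by positivity)]
      linarith [Nat.cast_nonneg (α := ℝ) n]
    calc ‖b' n j‖₊ = ‖a j + (b' n j - a j)‖₊ := by ring_nf
      _ ≤ ‖a j‖₊ + ‖b' n j - a j‖₊ := nnnorm_add_le _ _
      _ ≤ A + 1 := by
          gcongr
          · exact Finset.le_sup (f := fun i => ‖a i‖₊) (Finset.mem_univ j)
          · rwa [← NNReal.coe_le_coe, coe_nnnorm, NNReal.coe_one]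
  -- bound on the roots
  have hsbound : ∀ n, s' n ∈ Metric.closedBall (0 : Fin k → ℂ) ((A + 2 : NNReal) : ℝ) := by
    intro n
    rw [mem_closedBall_zero_iff]
    refine (pi_norm_le_iff_of_nonneg (by positivity)).mpr fun i => ?_
    have := root_bound (s' n) (A + 1) (fun j => (hcoeff n j).symm ▸ hbbound n j) i
    have h2 : ‖s' n i‖₊ ≤ A + 2 := by
      refine this.le.trans ?_
      push_cast
      ring_nf
      rfl
    exact_mod_cast h2
  obtain ⟨t, _, φ, hφ, htend⟩ := tendsto_subseq_of_bounded
    (Metric.isBounded_closedBall (x := (0 : Fin k → ℂ)) (r := ((A + 2 : NNReal) : ℝ))) hsbound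
  -- coefficients converge to a
  have hcoefft : ∀ j : Fin k, (∏ i : Fin k, (X - C (t i))).coeff j = a j := by
    intro j
    have h1 : Filter.Tendsto (fun n => (∏ i : Fin k, (X - C (s' (φ n) i))).coeff j)
        Filter.atTop (nhds ((∏ i : Fin k, (X - C (t i))).coeff j)) :=
      ((cont_coeff Finset.univ (j : ℕ)).tendsto t).comp htend
    have h2 : Filter.Tendsto (fun n => (∏ i : Fin k, (X - C (s' (φ n) i))).coeff j)
        Filter.atTop (nhds (a j)) := by
      rw [tendsto_iff_dist_tendsto_zero]
      refine squeeze_zero (fun n => dist_nonneg) (fun n => ?_)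
        tendsto_one_div_add_atTop_nhds_zero_nat
      rw [hcoeff (φ n) j, dist_eq_norm]
      refine (hb (φ n) j).le.trans ?_
      refine one_div_le_one_div_of_le (by positivity) ?_
      have : (n : ℝ) ≤ (φ n : ℝ) := by exact_mod_cast hφ.le_apply
      linarith
    exact tendsto_nhds_unique h1 h2
  -- the limit polynomial equals the original
  have hPt : (∏ i : Fin k, (X - C (t i))) = ∏ i : Fin k, (X - C (r i)) := by
    rw [← h, ← monic_rep _ (prod_monic t) (prod_natDegree t)]
    congr 1
    exact Finset.sum_congr rfl fun i _ => by rw [hcoefft i]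
  -- multiset of roots equal, extract permutation
  have hms : Multiset.map t Finset.univ.val = Multiset.map r Finset.univ.val := by
    rw [← prod_roots t, ← prod_roots r, hPt]
  have hperm : (List.ofFn t).Perm (List.ofFn r) := by
    rw [← Multiset.coe_eq_coe]
    have e : ∀ f : Fin k → ℂ, (↑(List.ofFn f) : Multiset ℂ) = Multiset.map f Finset.univ.val := by
      intro f
      rw [List.ofFn_eq_map, Fin.univ_def]
      rfl
    rw [e t, e r, hms]
  obtain ⟨σ, hσ⟩ := exists_perm_of_ofFn_perm t r hperm
  -- derive contradiction
  have hclose : ∀ᶠ n in Filter.atTop, dist (s' (φ n)) t < ε :=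
    (Metric.tendsto_nhds.mp htend) ε hε
  obtain ⟨n, hn⟩ := hclose.exists
  obtain ⟨i, hi⟩ := hfar (φ n) σ
  have : ‖s' (φ n) i - r (σ i)‖ < ε := by
    rw [← hσ i, ← dist_eq_norm]
    exact lt_of_le_of_lt (dist_le_pi_dist (s' (φ n)) t i) hn
  exact absurd hi (not_le.mpr this)
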